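/- Let M be a compact metric space with Borel probability measures, and let μ_n, ν_n be sequences of Borel probability measures absolutely continuous with respect to a reference measure m, with densities φ_n, ψ_n bounded below by κ_* > 0. Suppose ∫_A |φ_n − ψ_n| dm ≤ m(A) K μ^n for all Borel sets A, with constants K > 0 and μ ∈ (0,1). Then for any finite measurable partition 𝒜 of M all of whose elements have m-measure less than e^{-1}, one has |∑_{A∈𝒜} μ_n(A) log μ_n(A) − ∑_{A∈𝒜} ν_n(A) log ν_n(A)| ≤ −Kμ^n(1 + log κ_*) + K μ^n H_m(𝒜), where H_m(𝒜) = −∑_{A∈𝒜} m(A) log m(A). -/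

import Mathlib

open MeasureTheory

/-- Gibbs-type convexity bound: for positive `a, b`,
`a log a - b log b ≤ (a - b) * (1 + log a)`. -/
lemma eta_diff_le (a b : ℝ) (ha : 0 < a) (hb : 0 < b) :
    a * Real.log a - b * Real.log b ≤ (a - b) * (1 + Real.log a) := by
  have h1 : Real.log (a / b) ≤ a / b - 1 :=
    Real.log_le_sub_one_of_pos (div_pos ha hb)
  rw [Real.log_div ha.ne' hb.ne'] at h1
  have h2 : b * (Real.log a - Real.log b) ≤ b * (a / b - 1) :=
    mul_le_mul_of_nonneg_left h1 hb.le
  have h3 : b * (a / b - 1) = a - b := by field_simp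
  nlinarith [h2]

/-- Key per-element estimate. -/
lemma key_est (c κ t a d : ℝ) (hκ : 0 < κ) (hc : 0 ≤ c) (ht : 0 ≤ t)
    (ht' : t < Real.exp (-1)) (ha : κ * t ≤ a) (hd : |d| ≤ t * c) :
    d * (1 + Real.log a - Real.log κ) ≤
      c * (a - 2 * t - t * Real.log κ - t * Real.log t) := by
  rcases eq_or_lt_of_le ht with h0 | htpos
  · -- t = 0, hence d = 0
    have hd0 : d = 0 := by
      have : |d| ≤ 0 := by simpa [← h0] using hd
      exact abs_nonpos_iff.mp this
    have ha0 : 0 ≤ a := le_trans (by simp [← h0]) ha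
    simp [hd0, ← h0]
    positivity
  · have hat : 0 < a := lt_of_lt_of_le (mul_pos hκ htpos) ha
    have hlogt : Real.log t < -1 := by
      have := Real.log_lt_log htpos ht'
      simpa [Real.log_exp] using this
    have hloga : Real.log κ + Real.log t ≤ Real.log a := by
      have := Real.log_le_log (mul_pos hκ htpos) ha
      rwa [Real.log_mul hκ.ne' htpos.ne'] at this
    set X : ℝ := 1 + Real.log a - Real.log κ with hX
    have hXabs : |X| ≤ X - 2 - 2 * Real.log t := by
      rcases abs_cases X with ⟨h, _⟩ | ⟨h, _⟩ <;> rw [h] <;> nlinarith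
    have h1 : d * X ≤ |d| * |X| := by
      calc d * X ≤ |d * X| := le_abs_self _
      _ = |d| * |X| := abs_mul _ _
    have h2 : |d| * |X| ≤ (t * c) * (X - 2 - 2 * Real.log t) := by
      apply mul_le_mul hd hXabs (abs_nonneg _)
      positivity
    -- Gibbs: t * log a ≤ t * log t + (a - t)
    have h3 : t * Real.log a ≤ t * Real.log t + (a - t) := by
      have hg : Real.log (a / t) ≤ a / t - 1 :=
        Real.log_le_sub_one_of_pos (div_pos hat htpos)
      rw [Real.log_div hat.ne' htpos.ne'] at hg
      have := mul_le_mul_of_nonneg_left hg htpos.le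
      have he : t * (a / t - 1) = a - t := by field_simp
      nlinarith
    calc d * X ≤ (t * c) * (X - 2 - 2 * Real.log t) := le_trans h1 h2
      _ = c * (t + t * Real.log a - t * Real.log κ - 2 * t - 2 * (t * Real.log t)) := by
          rw [hX]; ring
      _ ≤ c * (a - 2 * t - t * Real.log κ - t * Real.log t) := by
          apply mul_le_mul_of_nonneg_left _ hc
          nlinarith

theorem stmt18 {α : Type*} [MeasurableSpace α]
    (m : Measure α) [IsProbabilityMeasure m]
    (φ ψ : ℕ → α → ℝ) (κ : ℝ) (hκ : 0 < κ)
    (hφlb : ∀ n x, κ ≤ φ n x) (hψlb : ∀ n x, κ ≤ ψ n x)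
    (hφint : ∀ n, Integrable (φ n) m) (hψint : ∀ n, Integrable (ψ n) m)
    (hφ1 : ∀ n, ∫ x, φ n x ∂m = 1) (hψ1 : ∀ n, ∫ x, ψ n x ∂m = 1)
    (K μ : ℝ) (hK : 0 < K) (hμ : μ ∈ Set.Ioo (0 : ℝ) 1)
    (hL1 : ∀ n : ℕ, ∀ A : Set α, MeasurableSet A →
      ∫ x in A, |φ n x - ψ n x| ∂m ≤ (m A).toReal * K * μ ^ n)
    (𝒜 : Finset (Set α))
    (hmeas : ∀ A ∈ 𝒜, MeasurableSet A)
    (hdisj : ∀ A ∈ 𝒜, ∀ B ∈ 𝒜, A ≠ B → Disjoint A B)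
    (hcover : ⋃₀ (𝒜 : Set (Set α)) = Set.univ)
    (hsmall : ∀ A ∈ 𝒜, (m A).toReal < Real.exp (-1)) :
    ∀ n : ℕ,
      |(∑ A ∈ 𝒜, (∫ x in A, φ n x ∂m) * Real.log (∫ x in A, φ n x ∂m)) -
        ∑ A ∈ 𝒜, (∫ x in A, ψ n x ∂m) * Real.log (∫ x in A, ψ n x ∂m)| ≤
      -(K * μ ^ n) * (1 + Real.log κ) +
        K * μ ^ n * (-∑ A ∈ 𝒜, (m A).toReal * Real.log (m A).toReal) := by
  intro n
  set c : ℝ := K * μ ^ n with hcdef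
  have hc : 0 < c := mul_pos hK (pow_pos hμ.1 n)
  set a : Set α → ℝ := fun A => ∫ x in A, φ n x ∂m with hadef
  set b : Set α → ℝ := fun A => ∫ x in A, ψ n x ∂m with hbdef
  set t : Set α → ℝ := fun A => (m A).toReal with htdef
  have hpair : Set.Pairwise (↑𝒜) (Function.onFun Disjoint (id : Set α → Set α)) := by
    intro A hA B hB hne
    exact hdisj A hA B hB hne
  have hbiU : (⋃ A ∈ 𝒜, A) = Set.univ := by
    rw [← hcover]; exact (Set.sUnion_eq_biUnion).symm
  -- sums of integrals
  have hsuma : ∑ A ∈ 𝒜, a A = 1 := by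
    rw [hadef]
    have := integral_biUnion_finset (f := φ n) (μ := m) 𝒜 hmeas hpair
      (fun A _ => (hφint n).integrableOn)
    rw [← this, hbiU, Measure.restrict_univ, hφ1 n]
  have hsumb : ∑ A ∈ 𝒜, b A = 1 := by
    rw [hbdef]
    have := integral_biUnion_finset (f := ψ n) (μ := m) 𝒜 hmeas hpair
      (fun A _ => (hψint n).integrableOn)
    rw [← this, hbiU, Measure.restrict_univ, hψ1 n]
  have hsumt : ∑ A ∈ 𝒜, t A = 1 := by
    have h1 : m (⋃ A ∈ 𝒜, A) = ∑ A ∈ 𝒜, m A :=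
      measure_biUnion_finset hpair (fun A hA => hmeas A hA)
    rw [hbiU, measure_univ] at h1
    have h2 : ((∑ A ∈ 𝒜, m A).toReal) = ∑ A ∈ 𝒜, (m A).toReal :=
      ENNReal.toReal_sum (fun A _ => measure_ne_top m A)
    rw [htdef]
    simp only [← h2, ← h1, ENNReal.toReal_one]
  -- lower bounds
  have halb : ∀ A ∈ 𝒜, κ * t A ≤ a A := fun A hA =>
    setIntegral_ge_of_const_le_real (hmeas A hA) (measure_ne_top m A)
      (fun x _ => hφlb n x) (hφint n).integrableOn
  have hblb : ∀ A ∈ 𝒜, κ * t A ≤ b A := fun A hA =>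
    setIntegral_ge_of_const_le_real (hmeas A hA) (measure_ne_top m A)
      (fun x _ => hψlb n x) (hψint n).integrableOn
  have htnn : ∀ A, 0 ≤ t A := fun A => ENNReal.toReal_nonneg
  -- difference bound
  have hdiff : ∀ A ∈ 𝒜, |a A - b A| ≤ t A * c := by
    intro A hA
    have h1 : a A - b A = ∫ x in A, (φ n x - ψ n x) ∂m :=
      (integral_sub (hφint n).integrableOn (hψint n).integrableOn).symm
    have h2 : |∫ x in A, (φ n x - ψ n x) ∂m| ≤ ∫ x in A, |φ n x - ψ n x| ∂m := by
      simpa [Real.norm_eq_abs] using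
        norm_integral_le_integral_norm (μ := m.restrict A) (f := fun x => φ n x - ψ n x)
    rw [h1]
    calc |∫ x in A, (φ n x - ψ n x) ∂m| ≤ ∫ x in A, |φ n x - ψ n x| ∂m := h2
      _ ≤ (m A).toReal * K * μ ^ n := hL1 n A (hmeas A hA)
      _ = t A * c := by rw [htdef, hcdef, mul_assoc]
  -- positivity dichotomy per set
  have hposdic : ∀ A ∈ 𝒜, (a A = 0 ∧ b A = 0 ∧ t A = 0) ∨ (0 < a A ∧ 0 < b A ∧ 0 < t A) := by
    intro A hA
    by_cases h0 : m A = 0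
    · left
      have hz : m.restrict A = 0 := Measure.restrict_eq_zero.mpr h0
      refine ⟨?_, ?_, ?_⟩ <;> simp [hadef, hbdef, htdef, hz, h0]
    · right
      have htpos : 0 < t A := ENNReal.toReal_pos h0 (measure_ne_top m A)
      exact ⟨lt_of_lt_of_le (mul_pos hκ htpos) (halb A hA),
        lt_of_lt_of_le (mul_pos hκ htpos) (hblb A hA), htpos⟩
  -- per-element upper bound for the η-difference against the shifted derivative
  have hup : ∀ A ∈ 𝒜,
      a A * Real.log (a A) - b A * Real.log (b A) ≤ (a A - b A) * (1 + Real.log (a A)) := by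
    intro A hA
    rcases hposdic A hA with ⟨h1, h2, _⟩ | ⟨h1, h2, _⟩
    · simp [h1, h2]
    · exact eta_diff_le _ _ h1 h2
  have hlo : ∀ A ∈ 𝒜,
      (a A - b A) * (1 + Real.log (b A)) ≤ a A * Real.log (a A) - b A * Real.log (b A) := by
    intro A hA
    rcases hposdic A hA with ⟨h1, h2, _⟩ | ⟨h1, h2, _⟩
    · simp [h1, h2]
    · have := eta_diff_le _ _ h2 h1
      nlinarith
  -- target right-hand side rewritten
  set R : ℝ := -(K * μ ^ n) * (1 + Real.log κ) +
      K * μ ^ n * (-∑ A ∈ 𝒜, (m A).toReal * Real.log (m A).toReal) with hRdef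
  have expand : ∀ u : Set α → ℝ,
      ∑ A ∈ 𝒜, (u A - 2 * t A - t A * Real.log κ - t A * Real.log (t A))
        = (∑ A ∈ 𝒜, u A) - 2 * (∑ A ∈ 𝒜, t A) - (∑ A ∈ 𝒜, t A) * Real.log κ
          - ∑ A ∈ 𝒜, t A * Real.log (t A) := by
    intro u
    rw [Finset.sum_sub_distrib, Finset.sum_sub_distrib, Finset.sum_sub_distrib,
      Finset.mul_sum, Finset.sum_mul]
  have hRsum : R = ∑ A ∈ 𝒜, c * (a A - 2 * t A - t A * Real.log κ - t A * Real.log (t A)) := by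
    rw [← Finset.mul_sum, expand, hsuma, hsumt]
    simp only [hRdef, hcdef, htdef]
    ring
  have hRsumb : R = ∑ A ∈ 𝒜, c * (b A - 2 * t A - t A * Real.log κ - t A * Real.log (t A)) := by
    rw [← Finset.mul_sum, expand, hsumb, hsumt]
    simp only [hRdef, hcdef, htdef]
    ring
  have hsumab : ∑ A ∈ 𝒜, (a A - b A) = 0 := by
    rw [Finset.sum_sub_distrib, hsuma, hsumb]; ring
  rw [abs_le]
  constructor
  · -- lower bound
    have step1 : ∑ A ∈ 𝒜, (a A - b A) * (1 + Real.log (b A))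
        ≤ (∑ A ∈ 𝒜, a A * Real.log (a A)) - ∑ A ∈ 𝒜, b A * Real.log (b A) := by
      rw [← Finset.sum_sub_distrib]
      exact Finset.sum_le_sum hlo
    have step2 : -R ≤ ∑ A ∈ 𝒜, (a A - b A) * (1 + Real.log (b A)) := by
      have hshift : ∑ A ∈ 𝒜, (a A - b A) * (1 + Real.log (b A))
          = ∑ A ∈ 𝒜, (a A - b A) * (1 + Real.log (b A) - Real.log κ)
            + Real.log κ * ∑ A ∈ 𝒜, (a A - b A) := by
        rw [Finset.mul_sum, ← Finset.sum_add_distrib]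
        congr 1; ext A; ring
      rw [hshift, hsumab, mul_zero, add_zero, hRsumb, ← Finset.sum_neg_distrib]
      apply Finset.sum_le_sum
      intro A hA
      have := key_est c κ (t A) (b A) (b A - a A) hκ hc.le (htnn A) (hsmall A hA)
        (hblb A hA) (by rw [abs_sub_comm]; exact hdiff A hA)
      nlinarith
    linarith
  · -- upper bound
    have step1 : (∑ A ∈ 𝒜, a A * Real.log (a A)) - ∑ A ∈ 𝒜, b A * Real.log (b A)
        ≤ ∑ A ∈ 𝒜, (a A - b A) * (1 + Real.log (a A)) := by
      rw [← Finset.sum_sub_distrib]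
      exact Finset.sum_le_sum hup
    have step2 : ∑ A ∈ 𝒜, (a A - b A) * (1 + Real.log (a A)) ≤ R := by
      have hshift : ∑ A ∈ 𝒜, (a A - b A) * (1 + Real.log (a A))
          = ∑ A ∈ 𝒜, (a A - b A) * (1 + Real.log (a A) - Real.log κ)
            + Real.log κ * ∑ A ∈ 𝒜, (a A - b A) := by
        rw [Finset.mul_sum, ← Finset.sum_add_distrib]
        congr 1; ext A; ring
      rw [hshift, hsumab, mul_zero, add_zero, hRsum]
      apply Finset.sum_le_sum
      intro A hA
      exact key_est c κ (t A) (a A) (a A - b A) hκ hc.le (htnn A) (hsmall A hA)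
        (halb A hA) (hdiff A hA)
    linarith
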